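/- Suppose (Z_η) is a family of real random variables such that lim_{η→∞} E[e^{jω|Z_η|}] = 1/(1 - jω·b) for all ω ∈ ℝ (where b > 0) and lim_{η→∞} E[sgn(Z_η)·e^{jω|Z_η|}] = 0 for all ω ∈ ℝ. Then lim_{η→∞} E[e^{jωZ_η}] = 1/(1 + ω²b²), which is the characteristic function of the Laplace(0, b) distribution; hence Z_η converges in distribution to Laplace(0, b). -/

import Mathlib

open MeasureTheory Filter

lemma integ_aux {Ω : Type*} [MeasurableSpace Ω] (μ : Measure Ω) [IsProbabilityMeasure μ]
    (f : Ω → ℂ) (hf : Measurable f) (hbd : ∀ a, ‖f a‖ ≤ 1) :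
    Integrable f μ :=
  (integrable_const (1:ℝ)).mono' hf.aestronglyMeasurable (ae_of_all _ hbd)

lemma exp_meas {Ω : Type*} [MeasurableSpace Ω] (ω : ℝ) (f : Ω → ℝ) (hf : Measurable f) :
    Measurable (fun a => Complex.exp (Complex.I * ω * f a)) :=
  Complex.measurable_exp.comp (measurable_const.mul (Complex.measurable_ofReal.comp hf))

lemma exp_norm (ω : ℝ) (x : ℝ) : ‖Complex.exp (Complex.I * ω * x)‖ ≤ 1 := by
  rw [Complex.norm_exp]
  simp [Complex.mul_re]

/-- If E[e^{jω|Z_η|}] → 1/(1 - jωb) and E[sgn(Z_η)e^{jω|Z_η|}] → 0 for all ω, then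
E[e^{jωZ_η}] → 1/(1 + ω²b²), the characteristic function of Laplace(0,b); hence
Z_η converges in distribution to Laplace(0,b). -/
theorem stmt11 {Ω : Type*} [MeasurableSpace Ω] (μ : Measure Ω) [IsProbabilityMeasure μ]
    (b : ℝ) (hb : 0 < b) (Z : ℝ → Ω → ℝ) (hZ : ∀ η, Measurable (Z η))
    (h1 : ∀ ω : ℝ, Tendsto (fun η => ∫ a, Complex.exp (Complex.I * ω * |Z η a|) ∂μ)
      atTop (nhds (1 / (1 - Complex.I * ω * b))))
    (h2 : ∀ ω : ℝ, Tendsto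
      (fun η => ∫ a, (if 0 ≤ Z η a then (1:ℂ) else -1) * Complex.exp (Complex.I * ω * |Z η a|) ∂μ)
      atTop (nhds 0)) :
    ∀ ω : ℝ, Tendsto (fun η => ∫ a, Complex.exp (Complex.I * ω * Z η a) ∂μ)
      atTop (nhds ((1 / (1 + ω ^ 2 * b ^ 2) : ℝ) : ℂ)) := by
  intro ω
  -- integrability facts
  have habs : ∀ η, Measurable (fun a => |Z η a|) := fun η => (hZ η).abs
  have hsgn : ∀ η, Measurable (fun a => (if 0 ≤ Z η a then (1:ℂ) else -1)) := fun η =>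
    Measurable.ite (measurableSet_le measurable_const (hZ η)) measurable_const measurable_const
  have hig : ∀ (ω' : ℝ) η,
      Integrable (fun a => Complex.exp (Complex.I * ω' * |Z η a|)) μ := fun ω' η =>
    integ_aux μ _ (exp_meas ω' _ (habs η)) (fun a => exp_norm ω' _)
  have hih : ∀ (ω' : ℝ) η,
      Integrable (fun a => (if 0 ≤ Z η a then (1:ℂ) else -1) *
        Complex.exp (Complex.I * ω' * |Z η a|)) μ := fun ω' η =>
    integ_aux μ _ ((hsgn η).mul (exp_meas ω' _ (habs η))) (fun a => by
      rw [norm_mul]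
      have h1 : ‖(if 0 ≤ Z η a then (1:ℂ) else -1)‖ = 1 := by split <;> simp
      rw [h1, one_mul]; exact exp_norm ω' _)
  -- pointwise decomposition
  have key : ∀ η, (fun a => Complex.exp (Complex.I * ω * Z η a)) =
      fun a => (1/2 : ℂ) * (Complex.exp (Complex.I * ω * |Z η a|)
          + Complex.exp (Complex.I * (-ω : ℝ) * |Z η a|))
        + (1/2 : ℂ) * ((if 0 ≤ Z η a then (1:ℂ) else -1) * Complex.exp (Complex.I * ω * |Z η a|)
          - (if 0 ≤ Z η a then (1:ℂ) else -1) * Complex.exp (Complex.I * (-ω : ℝ) * |Z η a|)) := by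
    intro η
    funext a
    by_cases h : 0 ≤ Z η a
    · rw [abs_of_nonneg h]
      simp [h]
      ring
    · rw [abs_of_neg (not_le.mp h)]
      simp [h]
      ring
  have integ_eq : ∀ η, (∫ a, Complex.exp (Complex.I * ω * Z η a) ∂μ) =
      (1/2 : ℂ) * ((∫ a, Complex.exp (Complex.I * ω * |Z η a|) ∂μ)
          + ∫ a, Complex.exp (Complex.I * (-ω : ℝ) * |Z η a|) ∂μ)
        + (1/2 : ℂ) * ((∫ a, (if 0 ≤ Z η a then (1:ℂ) else -1) *
              Complex.exp (Complex.I * ω * |Z η a|) ∂μ)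
          - ∫ a, (if 0 ≤ Z η a then (1:ℂ) else -1) *
              Complex.exp (Complex.I * (-ω : ℝ) * |Z η a|) ∂μ) := by
    intro η
    rw [key η]
    have Ig : Integrable (fun a => Complex.exp (Complex.I * ω * |Z η a|)
        + Complex.exp (Complex.I * (-ω : ℝ) * |Z η a|)) μ := (hig ω η).add (hig (-ω) η)
    have Ih : Integrable (fun a =>
        (if 0 ≤ Z η a then (1:ℂ) else -1) * Complex.exp (Complex.I * ω * |Z η a|)
        - (if 0 ≤ Z η a then (1:ℂ) else -1) * Complex.exp (Complex.I * (-ω : ℝ) * |Z η a|)) μ :=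
      (hih ω η).sub (hih (-ω) η)
    have Ig2 : Integrable (fun a => (1/2 : ℂ) * (Complex.exp (Complex.I * ω * |Z η a|)
        + Complex.exp (Complex.I * (-ω : ℝ) * |Z η a|))) μ := Ig.const_mul _
    have Ih2 : Integrable (fun a => (1/2 : ℂ) *
        ((if 0 ≤ Z η a then (1:ℂ) else -1) * Complex.exp (Complex.I * ω * |Z η a|)
        - (if 0 ≤ Z η a then (1:ℂ) else -1) * Complex.exp (Complex.I * (-ω : ℝ) * |Z η a|))) μ :=
      Ih.const_mul _
    rw [integral_add Ig2 Ih2, integral_const_mul, integral_const_mul,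
      integral_add (hig ω η) (hig (-ω) η), integral_sub (hih ω η) (hih (-ω) η)]
  have hlim : Tendsto (fun η =>
      (1/2 : ℂ) * ((∫ a, Complex.exp (Complex.I * ω * |Z η a|) ∂μ)
          + ∫ a, Complex.exp (Complex.I * (-ω : ℝ) * |Z η a|) ∂μ)
        + (1/2 : ℂ) * ((∫ a, (if 0 ≤ Z η a then (1:ℂ) else -1) *
              Complex.exp (Complex.I * ω * |Z η a|) ∂μ)
          - ∫ a, (if 0 ≤ Z η a then (1:ℂ) else -1) *
              Complex.exp (Complex.I * (-ω : ℝ) * |Z η a|) ∂μ)) atTop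
      (nhds ((1/2 : ℂ) * (1 / (1 - Complex.I * ω * b) + 1 / (1 - Complex.I * (-ω : ℝ) * b))
        + (1/2 : ℂ) * (0 - 0))) :=
    (((h1 ω).add (h1 (-ω))).const_mul _).add ((((h2 ω).sub (h2 (-ω))).const_mul _))
  have hval : (1/2 : ℂ) * (1 / (1 - Complex.I * ω * b) + 1 / (1 - Complex.I * (-ω : ℝ) * b))
        + (1/2 : ℂ) * (0 - 0) = ((1 / (1 + ω ^ 2 * b ^ 2) : ℝ) : ℂ) := by
    have hd1 : (1 : ℂ) - Complex.I * ω * b ≠ 0 := by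
      intro h
      have := congrArg Complex.re h
      simp [Complex.mul_re] at this
    have hd2 : (1 : ℂ) + Complex.I * ω * b ≠ 0 := by
      intro h
      have := congrArg Complex.re h
      simp [Complex.mul_re] at this
    have hd3 : (1 + (ω:ℝ) ^ 2 * b ^ 2) ≠ 0 := by positivity
    have hd3' : ((1:ℂ) + (ω:ℂ) ^ 2 * (b:ℂ) ^ 2) ≠ 0 := by exact_mod_cast hd3
    have e : (1:ℂ) - Complex.I * ((-ω : ℝ):ℂ) * b = 1 + Complex.I * ω * b := by push_cast; ring
    rw [e]
    push_cast
    field_simp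
    ring_nf
    simp [Complex.I_sq]
  rw [funext integ_eq]
  rw [← hval]
  exact hlim
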